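/- Let p/q be rational, A : ℝ/ℤ → SL(2,ℝ), and define the iterates A_s(x) = A(x + (s−1)p/q)···A(x) for s ≥ 1, with A_0 = id. For l ∈ {0, 1} and 0 ≤ k ≤ q−1 set W_k(x) = ∑_{s=0}^{q−1} R_{ks/q} R_{ls/(2q)} A_s(x). Then for every x, W_k(x + p/q) A(x) = R_{−(2k+l)/(2q)} ( W_k(x) + (−1)^l A_q(x) − id ). -/

import Mathlib

open Real

noncomputable section

/-- The rotation matrix `R_θ ∈ SO(2,ℝ)`. -/
def RotR (θ : ℝ) : Matrix (Fin 2) (Fin 2) ℝ :=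
  !![Real.cos (2 * π * θ), -Real.sin (2 * π * θ);
     Real.sin (2 * π * θ), Real.cos (2 * π * θ)]

/-- Iterates of the cocycle: `cocycleIterR α A s x = A(x+(s-1)α) ⋯ A(x)`, with `A_0 = id`. -/
def cocycleIterR (α : ℝ) (A : ℝ → Matrix (Fin 2) (Fin 2) ℝ) :
    ℕ → ℝ → Matrix (Fin 2) (Fin 2) ℝ
  | 0 => fun _ => 1
  | s + 1 => fun x => A (x + (s : ℝ) * α) * cocycleIterR α A s x

/-- The discrete Fourier transform `W_k(x) = ∑_{s=0}^{q−1} R_{ks/q} R_{ls/(2q)} A_s(x)`. -/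
def Wdft (p : ℤ) (q : ℕ) (l : ℕ) (A : ℝ → Matrix (Fin 2) (Fin 2) ℝ) (k : ℕ) (x : ℝ) :
    Matrix (Fin 2) (Fin 2) ℝ :=
  ∑ s ∈ Finset.range q,
    RotR (((k * s : ℕ) : ℝ) / (q : ℝ)) * RotR (((l * s : ℕ) : ℝ) / (2 * (q : ℝ))) *
      cocycleIterR ((p : ℝ) / (q : ℝ)) A s x

lemma cos2pik (k : ℕ) : Real.cos (2 * π * k) = 1 := by
  rw [show 2 * π * (k:ℝ) = k * (2 * π) by ring]; exact Real.cos_nat_mul_two_pi k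

lemma sin2pik (k : ℕ) : Real.sin (2 * π * k) = 0 := by
  rw [show 2 * π * (k:ℝ) = ((2*k : ℕ) : ℝ) * π by push_cast; ring]
  exact Real.sin_nat_mul_pi (2*k)

lemma RotR_mul (a b : ℝ) : RotR a * RotR b = RotR (a + b) := by
  have h : 2 * π * (a + b) = 2*π*a + 2*π*b := by ring
  rw [RotR, RotR, RotR, h]
  ext i j
  fin_cases i <;> fin_cases j <;>
    simp [Matrix.mul_apply, Fin.sum_univ_two, Real.cos_add, Real.sin_add] <;> ring

lemma RotR_nat (k : ℕ) : RotR (k : ℝ) = 1 := by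
  rw [RotR, cos2pik, sin2pik]
  ext i j; fin_cases i <;> fin_cases j <;> simp [Matrix.one_apply]

lemma RotR_zero : RotR 0 = 1 := by
  simpa using RotR_nat 0

lemma RotR_nat_add_half (k : ℕ) : RotR ((k : ℝ) + 1/2) = -1 := by
  have h : 2 * π * ((k:ℝ) + 1/2) = 2*π*k + π := by ring
  rw [RotR, h, Real.cos_add_pi, Real.sin_add_pi, cos2pik, sin2pik]
  ext i j; fin_cases i <;> fin_cases j <;> simp [Matrix.one_apply]


/-- **Exact identity for the discrete Fourier transform of the iterates:**
`W_k(x + p/q) A(x) = R_{−(2k+l)/(2q)} ( W_k(x) + (−1)^l A_q(x) − id )`. -/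
theorem Wdft_identity (p : ℤ) (q : ℕ) (hq : 0 < q)
    (A : ℝ → Matrix (Fin 2) (Fin 2) ℝ)
    (hper : ∀ x : ℝ, A (x + 1) = A x) (hdet : ∀ x : ℝ, (A x).det = 1)
    (l : ℕ) (hl : l ≤ 1) (k : ℕ) (hk : k < q) (x : ℝ) :
    Wdft p q l A k (x + (p : ℝ) / (q : ℝ)) * A x =
      RotR (-(((2 * k + l : ℕ) : ℝ) / (2 * (q : ℝ)))) *
        (Wdft p q l A k x + ((-1 : ℝ)) ^ l • cocycleIterR ((p : ℝ) / (q : ℝ)) A q x - 1) := by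
  have hq0 : (q:ℝ) ≠ 0 := Nat.cast_ne_zero.mpr hq.ne'
  set α := (p : ℝ) / (q : ℝ) with hα
  set c : ℝ := ((2 * k + l : ℕ) : ℝ) / (2 * (q : ℝ)) with hc
  have hW : ∀ y, Wdft p q l A k y
      = ∑ s ∈ Finset.range q, RotR ((s : ℝ) * c) * cocycleIterR α A s y := by
    intro y
    refine Finset.sum_congr rfl fun s _ => ?_
    have harg : ((k * s : ℕ) : ℝ) / (q : ℝ) + ((l * s : ℕ) : ℝ) / (2 * (q : ℝ))
        = (s : ℝ) * c := by
      rw [hc]; push_cast; field_simp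
    rw [RotR_mul, harg]
  have hcoc : ∀ s : ℕ, cocycleIterR α A s (x + α) * A x = cocycleIterR α A (s+1) x := by
    intro s
    induction s with
    | zero => simp [cocycleIterR]
    | succ n ih =>
      show A (x + α + (n:ℝ)*α) * cocycleIterR α A n (x+α) * A x
          = A (x + ((n+1 : ℕ):ℝ)*α) * cocycleIterR α A (n+1) x
      rw [mul_assoc, ih]
      congr 2
      push_cast; ring
  rw [hW, hW, Finset.sum_mul]
  have hqc : RotR ((q : ℝ) * c) = ((-1:ℝ))^l • (1 : Matrix (Fin 2) (Fin 2) ℝ) := by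
    interval_cases l
    · rw [show (q:ℝ) * c = (k : ℝ) by rw [hc]; push_cast; field_simp; ring]
      rw [RotR_nat k]; norm_num
    · rw [show (q:ℝ) * c = (k : ℝ) + 1/2 by rw [hc]; push_cast; field_simp]
      rw [RotR_nat_add_half k]; norm_num
  calc ∑ s ∈ Finset.range q, RotR ((s:ℝ)*c) * cocycleIterR α A s (x+α) * A x
      = ∑ s ∈ Finset.range q, RotR (-c) * (RotR (((s+1 : ℕ):ℝ)*c) * cocycleIterR α A (s+1) x) := by
        refine Finset.sum_congr rfl fun s _ => ?_
        rw [mul_assoc, hcoc s, ← mul_assoc, RotR_mul]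
        congr 2
        push_cast; ring
    _ = RotR (-c) * ∑ s ∈ Finset.range q, RotR (((s+1 : ℕ):ℝ)*c) * cocycleIterR α A (s+1) x := by
        rw [Finset.mul_sum]
    _ = RotR (-c) * ((∑ s ∈ Finset.range q, RotR ((s:ℝ)*c) * cocycleIterR α A s x)
          + ((-1:ℝ))^l • cocycleIterR α A q x - 1) := by
        congr 1
        have h1 := Finset.sum_range_succ'
          (fun s : ℕ => RotR ((s:ℝ)*c) * cocycleIterR α A s x) q
        have h2 := Finset.sum_range_succ
          (fun s : ℕ => RotR ((s:ℝ)*c) * cocycleIterR α A s x) q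
        rw [h2] at h1
        -- h1 : ∑ f + f q = ∑ (f ∘ succ) + f 0
        have h0 : RotR (((0:ℕ):ℝ)*c) * cocycleIterR α A 0 x = 1 := by
          norm_num [cocycleIterR, RotR_zero]
        rw [h0] at h1
        have hq' : RotR ((q:ℝ)*c) * cocycleIterR α A q x
            = ((-1:ℝ))^l • cocycleIterR α A q x := by
          rw [hqc, Matrix.smul_mul, one_mul]
        rw [← hq']
        have := eq_sub_of_add_eq h1.symm
        rw [this]
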